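/- Let l₀, l₁, l₂ > 0 and x₀ > 0 be real numbers, let ρ₁, ρ₂ ≥ 0 be real numbers, and let z be a complex number with Re(z) ≥ x₀. Then |(1/sinh(l₀z))·(ρ₁·cosh(l₁z)/sinh(l₁z) − ρ₂·sinh(l₂z)/cosh(l₂z))| ≤ (1/sinh(l₀x₀))·(ρ₁·coth(l₁x₀) + ρ₂·coth(l₂x₀)). -/

import Mathlib

lemma sq_abs_sinh_aux (x y : ℝ) : (‖Complex.sinh ((x : ℂ) + (y : ℂ) * Complex.I)‖)^2 =
    Real.sinh x ^ 2 * Real.cos y ^ 2 + Real.cosh x ^ 2 * Real.sin y ^ 2 := by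
  rw [Complex.sinh_add, Complex.sinh_mul_I, Complex.cosh_mul_I, Complex.sq_norm,
    Complex.normSq_apply]
  simp [← Complex.ofReal_sinh, ← Complex.ofReal_cosh, ← Complex.ofReal_sin,
    ← Complex.ofReal_cos, Complex.mul_re, Complex.mul_im]
  ring

lemma sq_abs_cosh_aux (x y : ℝ) : (‖Complex.cosh ((x : ℂ) + (y : ℂ) * Complex.I)‖)^2 =
    Real.cosh x ^ 2 * Real.cos y ^ 2 + Real.sinh x ^ 2 * Real.sin y ^ 2 := by
  rw [Complex.cosh_add, Complex.sinh_mul_I, Complex.cosh_mul_I, Complex.sq_norm,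
    Complex.normSq_apply]
  simp [← Complex.ofReal_sinh, ← Complex.ofReal_cosh, ← Complex.ofReal_sin,
    ← Complex.ofReal_cos, Complex.mul_re, Complex.mul_im]
  ring

lemma sq_abs_sinh' (w : ℂ) : (‖Complex.sinh w‖)^2 =
    Real.sinh w.re ^ 2 * Real.cos w.im ^ 2 + Real.cosh w.re ^ 2 * Real.sin w.im ^ 2 := by
  have := sq_abs_sinh_aux w.re w.im
  rwa [Complex.re_add_im] at this

lemma sq_abs_cosh' (w : ℂ) : (‖Complex.cosh w‖)^2 =
    Real.cosh w.re ^ 2 * Real.cos w.im ^ 2 + Real.sinh w.re ^ 2 * Real.sin w.im ^ 2 := by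
  have := sq_abs_cosh_aux w.re w.im
  rwa [Complex.re_add_im] at this

lemma sinh_re_le_abs_sinh (w : ℂ) (hw : 0 ≤ w.re) :
    Real.sinh w.re ≤ ‖Complex.sinh w‖ := by
  have h := sq_abs_sinh' w
  have hc := Real.sin_sq_add_cos_sq w.im
  have hcs : Real.cosh w.re ^ 2 = Real.sinh w.re ^ 2 + 1 := Real.cosh_sq w.re
  calc Real.sinh w.re = Real.sqrt ((Real.sinh w.re)^2) :=
        (Real.sqrt_sq (Real.sinh_nonneg_iff.mpr hw)).symm
    _ ≤ Real.sqrt ((‖Complex.sinh w‖)^2) := by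
        apply Real.sqrt_le_sqrt; nlinarith [sq_nonneg (Real.sin w.im)]
    _ = _ := Real.sqrt_sq (norm_nonneg _)

lemma sinh_re_le_abs_cosh (w : ℂ) (hw : 0 ≤ w.re) :
    Real.sinh w.re ≤ ‖Complex.cosh w‖ := by
  have h := sq_abs_cosh' w
  have hc := Real.sin_sq_add_cos_sq w.im
  have hcs : Real.cosh w.re ^ 2 = Real.sinh w.re ^ 2 + 1 := Real.cosh_sq w.re
  calc Real.sinh w.re = Real.sqrt ((Real.sinh w.re)^2) :=
        (Real.sqrt_sq (Real.sinh_nonneg_iff.mpr hw)).symm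
    _ ≤ Real.sqrt ((‖Complex.cosh w‖)^2) := by
        apply Real.sqrt_le_sqrt; nlinarith [sq_nonneg (Real.cos w.im)]
    _ = _ := Real.sqrt_sq (norm_nonneg _)

lemma abs_sinh_le_cosh_re (w : ℂ) :
    ‖Complex.sinh w‖ ≤ Real.cosh w.re := by
  have h := sq_abs_sinh' w
  have hc := Real.sin_sq_add_cos_sq w.im
  have hcs : Real.cosh w.re ^ 2 = Real.sinh w.re ^ 2 + 1 := Real.cosh_sq w.re
  calc ‖Complex.sinh w‖ = Real.sqrt ((‖Complex.sinh w‖)^2) :=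
        (Real.sqrt_sq (norm_nonneg _)).symm
    _ ≤ Real.sqrt ((Real.cosh w.re)^2) := by
        apply Real.sqrt_le_sqrt; nlinarith [sq_nonneg (Real.cos w.im)]
    _ = _ := Real.sqrt_sq (Real.cosh_pos (x := w.re)).le

lemma abs_cosh_le_cosh_re (w : ℂ) :
    ‖Complex.cosh w‖ ≤ Real.cosh w.re := by
  have h := sq_abs_cosh' w
  have hc := Real.sin_sq_add_cos_sq w.im
  have hcs : Real.cosh w.re ^ 2 = Real.sinh w.re ^ 2 + 1 := Real.cosh_sq w.re
  calc ‖Complex.cosh w‖ = Real.sqrt ((‖Complex.cosh w‖)^2) :=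
        (Real.sqrt_sq (norm_nonneg _)).symm
    _ ≤ Real.sqrt ((Real.cosh w.re)^2) := by
        apply Real.sqrt_le_sqrt; nlinarith [sq_nonneg (Real.sin w.im)]
    _ = _ := Real.sqrt_sq (Real.cosh_pos (x := w.re)).le

lemma coth_antitone {a b : ℝ} (hb : 0 < b) (hba : b ≤ a) :
    Real.cosh a / Real.sinh a ≤ Real.cosh b / Real.sinh b := by
  have ha : 0 < a := lt_of_lt_of_le hb hba
  rw [div_le_div_iff₀ (Real.sinh_pos_iff.mpr ha) (Real.sinh_pos_iff.mpr hb)]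
  have h := Real.sinh_sub a b
  have h2 : 0 ≤ Real.sinh (a - b) := Real.sinh_nonneg_iff.mpr (by linarith)
  nlinarith

/-- For `l₀, l₁, l₂, x₀ > 0`, `ρ₁, ρ₂ ≥ 0` and `Re(z) ≥ x₀`,
`|(1/sinh(l₀z))(ρ₁ cosh(l₁z)/sinh(l₁z) − ρ₂ sinh(l₂z)/cosh(l₂z))|
  ≤ (1/sinh(l₀x₀))(ρ₁ coth(l₁x₀) + ρ₂ coth(l₂x₀))`. -/
theorem stmt18 (l₀ l₁ l₂ x₀ : ℝ) (h0' : 0 < l₀) (h1 : 0 < l₁) (h2 : 0 < l₂) (h0 : 0 < x₀)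
    (ρ₁ ρ₂ : ℝ) (hρ₁ : 0 ≤ ρ₁) (hρ₂ : 0 ≤ ρ₂)
    (z : ℂ) (hz : x₀ ≤ z.re) :
    ‖(1 / Complex.sinh ((l₀ : ℂ) * z)) *
        ((ρ₁ : ℂ) * Complex.cosh ((l₁ : ℂ) * z) / Complex.sinh ((l₁ : ℂ) * z) -
         (ρ₂ : ℂ) * Complex.sinh ((l₂ : ℂ) * z) / Complex.cosh ((l₂ : ℂ) * z))‖ ≤
      (1 / Real.sinh (l₀ * x₀)) *
        (ρ₁ * (Real.cosh (l₁ * x₀) / Real.sinh (l₁ * x₀)) +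
         ρ₂ * (Real.cosh (l₂ * x₀) / Real.sinh (l₂ * x₀))) := by
  have hre : ∀ l : ℝ, ((l : ℂ) * z).re = l * z.re := by intro l; simp [Complex.mul_re]
  have hx : 0 < z.re := lt_of_lt_of_le h0 hz
  -- lower bounds
  have hS0 : Real.sinh (l₀ * x₀) ≤ ‖Complex.sinh ((l₀ : ℂ) * z)‖ := by
    refine le_trans ?_ (sinh_re_le_abs_sinh _ (by rw [hre]; positivity))
    rw [hre]; exact Real.sinh_le_sinh.mpr (by nlinarith)
  have hS1 : Real.sinh (l₁ * z.re) ≤ ‖Complex.sinh ((l₁ : ℂ) * z)‖ := by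
    have := sinh_re_le_abs_sinh ((l₁ : ℂ) * z) (by rw [hre]; positivity)
    rwa [hre] at this
  have hC2 : Real.sinh (l₂ * z.re) ≤ ‖Complex.cosh ((l₂ : ℂ) * z)‖ := by
    have := sinh_re_le_abs_cosh ((l₂ : ℂ) * z) (by rw [hre]; positivity)
    rwa [hre] at this
  -- upper bounds
  have hC1 : ‖Complex.cosh ((l₁ : ℂ) * z)‖ ≤ Real.cosh (l₁ * z.re) := by
    have := abs_cosh_le_cosh_re ((l₁ : ℂ) * z); rwa [hre] at this
  have hS2 : ‖Complex.sinh ((l₂ : ℂ) * z)‖ ≤ Real.cosh (l₂ * z.re) := by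
    have := abs_sinh_le_cosh_re ((l₂ : ℂ) * z); rwa [hre] at this
  have hs0pos : 0 < Real.sinh (l₀ * x₀) := Real.sinh_pos_iff.mpr (by positivity)
  have hs1pos : 0 < Real.sinh (l₁ * z.re) := Real.sinh_pos_iff.mpr (by positivity)
  have hs2pos : 0 < Real.sinh (l₂ * z.re) := Real.sinh_pos_iff.mpr (by positivity)
  have habsS0 : 0 < ‖Complex.sinh ((l₀ : ℂ) * z)‖ := lt_of_lt_of_le hs0pos hS0
  have habsS1 : 0 < ‖Complex.sinh ((l₁ : ℂ) * z)‖ := lt_of_lt_of_le hs1pos hS1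
  have habsC2 : 0 < ‖Complex.cosh ((l₂ : ℂ) * z)‖ := lt_of_lt_of_le hs2pos hC2
  rw [norm_mul, norm_div, norm_one]
  have step1 : ‖(ρ₁ : ℂ) * Complex.cosh ((l₁ : ℂ) * z) / Complex.sinh ((l₁ : ℂ) * z) -
         (ρ₂ : ℂ) * Complex.sinh ((l₂ : ℂ) * z) / Complex.cosh ((l₂ : ℂ) * z)‖ ≤
      ρ₁ * (Real.cosh (l₁ * x₀) / Real.sinh (l₁ * x₀)) +
      ρ₂ * (Real.cosh (l₂ * x₀) / Real.sinh (l₂ * x₀)) := by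
    refine le_trans (norm_sub_le _ _) ?_
    rw [norm_div, norm_div, norm_mul, norm_mul, Complex.norm_real, Complex.norm_real, Real.norm_eq_abs, Real.norm_eq_abs,
      abs_of_nonneg hρ₁, abs_of_nonneg hρ₂]
    have t1 : ‖Complex.cosh ((l₁ : ℂ) * z)‖ / ‖Complex.sinh ((l₁ : ℂ) * z)‖
        ≤ Real.cosh (l₁ * x₀) / Real.sinh (l₁ * x₀) := by
      refine le_trans (div_le_div₀ (Real.cosh_pos _).le hC1 hs1pos hS1) ?_
      exact coth_antitone (by positivity) (by nlinarith)
    have t2 : ‖Complex.sinh ((l₂ : ℂ) * z)‖ / ‖Complex.cosh ((l₂ : ℂ) * z)‖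
        ≤ Real.cosh (l₂ * x₀) / Real.sinh (l₂ * x₀) := by
      refine le_trans (div_le_div₀ (Real.cosh_pos _).le hS2 hs2pos hC2) ?_
      exact coth_antitone (by positivity) (by nlinarith)
    have nn1 : 0 ≤ ‖Complex.cosh ((l₁:ℂ)*z)‖ / ‖Complex.sinh ((l₁:ℂ)*z)‖ := by positivity
    have nn2 : 0 ≤ ‖Complex.sinh ((l₂:ℂ)*z)‖ / ‖Complex.cosh ((l₂:ℂ)*z)‖ := by positivity
    rw [mul_div_assoc, mul_div_assoc]
    gcongr
  have step0 : 1 / ‖Complex.sinh ((l₀ : ℂ) * z)‖ ≤ 1 / Real.sinh (l₀ * x₀) :=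
    one_div_le_one_div_of_le hs0pos hS0
  calc 1 / ‖Complex.sinh ((l₀ : ℂ) * z)‖ * _ ≤
      (1 / Real.sinh (l₀ * x₀)) * (ρ₁ * (Real.cosh (l₁ * x₀) / Real.sinh (l₁ * x₀)) +
        ρ₂ * (Real.cosh (l₂ * x₀) / Real.sinh (l₂ * x₀))) := by
        apply mul_le_mul step0 step1 (norm_nonneg _)
        positivity
    _ = _ := rfl
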